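/- Let P be a poset, V a pointwise finite dimensional persistence module indexed by P, and E a set of nonzero submodules of V. Assume that for each nonzero submodule W of V that is a direct summand of V, there exists a submodule U ∈ E with U contained in W such that U is a direct summand of W. Then there exists a subset A of E giving an internal direct sum decomposition V = ⊕_{U ∈ A} U. -/

import Mathlib

universe u v w w'

/-- A persistence module indexed by a poset `P`, over a field `k`. -/
structure PersMod (k : Type u) [Field k] (P : Type v) [PartialOrder P] :
    Type (max u v (w + 1)) where
  space : P → Type w
  [acg : ∀ x, AddCommGroup (space x)]
  [mod : ∀ x, Module k (space x)]
  map : ∀ {x y : P}, x ≤ y → (space x →ₗ[k] space y)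
  map_id : ∀ x : P, map (le_refl x) = LinearMap.id
  map_comp : ∀ {x y z : P} (hxy : x ≤ y) (hyz : y ≤ z),
    (map hyz).comp (map hxy) = map (hxy.trans hyz)

attribute [instance] PersMod.acg PersMod.mod

variable (k : Type u) [Field k] {P : Type v} [PartialOrder P]

/-- A morphism of persistence modules (a natural transformation). -/
structure PersHom (V : PersMod.{u, v, w} k P) (W : PersMod.{u, v, w'} k P) where
  app : ∀ x : P, V.space x →ₗ[k] W.space x
  natural : ∀ {x y : P} (h : x ≤ y) (v : V.space x),
    app y (V.map h v) = W.map h (app x v)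

/-- An isomorphism of persistence modules. -/
structure PersIso (V : PersMod.{u, v, w} k P) (W : PersMod.{u, v, w'} k P) where
  app : ∀ x : P, V.space x ≃ₗ[k] W.space x
  natural : ∀ {x y : P} (h : x ≤ y) (v : V.space x),
    app y (V.map h v) = W.map h (app x v)

/-- A subset `I` of a poset is convex if `x ≤ y ≤ z`, `x ∈ I`, `z ∈ I` imply `y ∈ I`. -/
def IsConvexIn (I : Set P) : Prop :=
  ∀ ⦃x y z : P⦄, x ∈ I → z ∈ I → x ≤ y → y ≤ z → y ∈ I

/-- A subset `I` of a poset is connected if any two points of `I` are joined by a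
zigzag path inside `I`. -/
def IsConnectedIn (I : Set P) : Prop :=
  ∀ x ∈ I, ∀ z ∈ I, ∃ (n : ℕ) (c : ℕ → P), (∀ i ≤ n, c i ∈ I) ∧ c 0 = x ∧ c n = z ∧
    ∀ i < n, c i ≤ c (i + 1) ∨ c (i + 1) ≤ c i

/-- An interval in a poset: nonempty, convex and connected. -/
def IsPosetInterval (I : Set P) : Prop :=
  I.Nonempty ∧ IsConvexIn I ∧ IsConnectedIn I

open Classical in
/-- The subspace of `k` used as the value of the constant module at `x`. -/
noncomputable def constSub (I : Set P) (x : P) : Submodule k k :=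
  if x ∈ I then ⊤ else ⊥

open Classical in
/-- The structure map of the constant module. -/
noncomputable def constMap (I : Set P) (x y : P) :
    constSub k I x →ₗ[k] constSub k I y :=
  LinearMap.codRestrict (constSub k I y)
    ((if y ∈ I then (LinearMap.id : k →ₗ[k] k) else 0).comp (constSub k I x).subtype)
    (fun c => by
      by_cases hy : y ∈ I
      · simp [constSub, hy]
      · simp only [if_neg hy, LinearMap.zero_comp, LinearMap.zero_apply]
        exact Submodule.zero_mem _)

open Classical in
/-- The constant (interval) module `M(I)` attached to a convex subset `I`. -/
noncomputable def constMod (I : Set P) (hI : IsConvexIn I) : PersMod.{u, v, u} k P where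
  space x := constSub k I x
  map {x y} _ := constMap k I x y
  map_id := fun x => by
    ext c
    by_cases hx : x ∈ I
    · simp [constMap, hx]
    · have hc : (c : k) = 0 := by
        have : (c : k) ∈ (if x ∈ I then (⊤ : Submodule k k) else ⊥) := c.2
        rw [if_neg hx] at this
        exact (Submodule.mem_bot k).1 this
      simp [constMap, hx, hc]
  map_comp := fun {x y z} hxy hyz => by
    ext c
    by_cases hz : z ∈ I
    · by_cases hy : y ∈ I
      · simp [constMap, hy, hz]
      · have hx : x ∉ I := fun hx => hy (hI hx hz hxy hyz)
        have hc : (c : k) = 0 := by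
          have : (c : k) ∈ (if x ∈ I then (⊤ : Submodule k k) else ⊥) := c.2
          rw [if_neg hx] at this
          exact (Submodule.mem_bot k).1 this
        simp [constMap, hy, hz, hc]
    · simp [constMap, hz]

/-- A submodule of a persistence module: a family of subspaces preserved by the
structure maps. -/
structure PersSubmod (V : PersMod.{u, v, w} k P) where
  carrier : ∀ x : P, Submodule k (V.space x)
  mapLe : ∀ {x y : P} (h : x ≤ y), ∀ v ∈ carrier x, V.map h v ∈ carrier y

/-- A submodule of a persistence module, viewed as a persistence module in its own
right. -/
def PersSubmod.toPersMod {V : PersMod.{u, v, w} k P} (U : PersSubmod k V) :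
    PersMod.{u, v, w} k P where
  space x := U.carrier x
  map {x y} h := (V.map h).restrict (U.mapLe h)
  map_id := fun x => by
    ext c
    simp [LinearMap.restrict_apply, V.map_id]
  map_comp := fun {x y z} hxy hyz => by
    ext c
    have := LinearMap.congr_fun (V.map_comp hxy hyz) (c : V.space x)
    simpa [LinearMap.restrict_apply] using this

/-- A persistence module is an interval module if it is isomorphic to a constant
module `M(I)` for some interval `I`. -/
def IsIntervalModule (V : PersMod.{u, v, w} k P) : Prop :=
  ∃ (I : Set P) (hI : IsPosetInterval I), Nonempty (PersIso k V (constMod k I hI.2.1))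

/-- `A` is an internal direct sum decomposition of `V`:
at each point the subspaces are independent and span everything. -/
def IsDecomp (V : PersMod.{u, v, w} k P) (A : Set (PersSubmod k V)) : Prop :=
  ∀ x : P, iSupIndep (fun U : A => (U : PersSubmod k V).carrier x) ∧
    ⨆ U : A, (U : PersSubmod k V).carrier x = ⊤

/-- An interval decomposition of `V`. -/
def IsIntervalDecomp (V : PersMod.{u, v, w} k P) (A : Set (PersSubmod k V)) : Prop :=
  IsDecomp k V A ∧ ∀ U ∈ A, IsIntervalModule k U.toPersMod

/-- `V` has an interval decomposition. -/
def HasIntervalDecomp (V : PersMod.{u, v, w} k P) : Prop :=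
  ∃ A : Set (PersSubmod k V), IsIntervalDecomp k V A

/-- A submodule of a persistence module is nonzero if it is nonzero at some point. -/
def PersSubmod.Nonzero {P : Type v} [PartialOrder P] {V : PersMod.{u, v, w} k P}
    (U : PersSubmod k V) : Prop :=
  ∃ x : P, U.carrier x ≠ ⊥

/-- `U` is a direct summand of the submodule `W` (inside `V`): there is a submodule
`Z` of `V` contained in `W` such that pointwise `W = U ⊕ Z`. -/
def PersSubmod.IsSummandIn {P : Type v} [PartialOrder P] {V : PersMod.{u, v, w} k P}
    (U W : PersSubmod k V) : Prop :=
  ∃ Z : PersSubmod k V, (∀ x : P, Z.carrier x ≤ W.carrier x) ∧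
    ∀ x : P, Disjoint (U.carrier x) (Z.carrier x) ∧
      U.carrier x ⊔ Z.carrier x = W.carrier x

/-- `U` is a direct summand of `V`. -/
def PersSubmod.IsSummand {P : Type v} [PartialOrder P] {V : PersMod.{u, v, w} k P}
    (U : PersSubmod k V) : Prop :=
  ∃ Z : PersSubmod k V, ∀ x : P, IsCompl (U.carrier x) (Z.carrier x)

section DecompAux

variable {k : Type u} [Field k] {P : Type v} [PartialOrder P] {V : PersMod.{u, v, w} k P}

/-- The pointwise supremum of a set of submodules, as a submodule. -/
def persSup (A : Set (PersSubmod k V)) : PersSubmod k V where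
  carrier x := ⨆ U : A, (U : PersSubmod k V).carrier x
  mapLe := by
    intro x y h v hv
    have hle : (⨆ U : A, (U : PersSubmod k V).carrier x) ≤
        Submodule.comap (V.map h) (⨆ U : A, (U : PersSubmod k V).carrier y) := by
      refine iSup_le fun U => ?_
      intro w hw
      exact Submodule.mem_comap.2
        (le_iSup (fun U : A => (U : PersSubmod k V).carrier y) U
          ((U : PersSubmod k V).mapLe h w hw))
    exact hle hv

lemma persSup_insert_carrier (U : PersSubmod k V) (A : Set (PersSubmod k V)) (x : P) :
    (persSup (insert U A)).carrier x = U.carrier x ⊔ (persSup A).carrier x := by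
  apply le_antisymm
  · refine iSup_le fun W => ?_
    rcases Set.mem_insert_iff.1 W.2 with h | h
    · rw [show (W : PersSubmod k V) = U from h]
      exact le_sup_left
    · exact (le_iSup (fun W' : A => (W' : PersSubmod k V).carrier x) ⟨W.1, h⟩).trans
        le_sup_right
  · refine sup_le (le_iSup (fun W : (insert U A : Set (PersSubmod k V)) =>
      (W : PersSubmod k V).carrier x) ⟨U, Set.mem_insert _ _⟩) (iSup_le fun W =>
      le_iSup (fun W' : (insert U A : Set (PersSubmod k V)) =>
        (W' : PersSubmod k V).carrier x) ⟨W.1, Set.mem_insert_of_mem _ W.2⟩)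

/-- The candidate pairs in the Zorn argument: an independent family `A ⊆ E`
together with a complement `B`. -/
abbrev GoodPair (E : Set (PersSubmod k V)) (A : Set (PersSubmod k V))
    (B : PersSubmod k V) : Prop :=
  A ⊆ E ∧ ∀ x : P, iSupIndep (fun U : A => (U : PersSubmod k V).carrier x) ∧
    Disjoint ((persSup A).carrier x) (B.carrier x) ∧
    (persSup A).carrier x ⊔ B.carrier x = ⊤

end DecompAux

/-- Decomposition criterion: if `E` is a set of nonzero submodules of a pointwise
finite dimensional persistence module `V` such that every nonzero direct summand `W`
of `V` contains a member of `E` which is a direct summand of `W`, then some subset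
of `E` gives an internal direct sum decomposition of `V`. -/
theorem decomp_criterion (P : Type v) [PartialOrder P]
    (V : PersMod.{u, v, w} k P) (hfd : ∀ x : P, FiniteDimensional k (V.space x))
    (E : Set (PersSubmod k V))
    (hE : ∀ U ∈ E, U.Nonzero k)
    (hyp : ∀ W : PersSubmod k V, W.Nonzero k → W.IsSummand k →
      ∃ U ∈ E, (∀ x : P, U.carrier x ≤ W.carrier x) ∧ U.IsSummandIn k W) :
    ∃ A ⊆ E, IsDecomp k V A := by
  classical
  let T := {p : Set (PersSubmod k V) × PersSubmod k V // GoodPair E p.1 p.2}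
  let r : T → T → Prop := fun p q =>
    p.1.1 ⊆ q.1.1 ∧ ∀ x : P, q.1.2.carrier x ≤ p.1.2.carrier x
  have rtrans : ∀ {a b c : T}, r a b → r b c → r a c :=
    fun h1 h2 => ⟨h1.1.trans h2.1, fun x => (h2.2 x).trans (h1.2 x)⟩
  have hbdd : ∀ c : Set T, IsChain r c → ∃ ub, ∀ a ∈ c, r a ub := by
    intro c hc
    rcases Set.eq_empty_or_nonempty c with rfl | hne
    · refine ⟨⟨(∅, ⟨fun _ => ⊤, fun _ _ _ => Submodule.mem_top⟩),
        ⟨Set.empty_subset E, fun x => ⟨?_, ?_, ?_⟩⟩⟩, by simp⟩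
      · intro U
        exact absurd U.2 (Set.notMem_empty _)
      · have hbot : (persSup (∅ : Set (PersSubmod k V))).carrier x = ⊥ := by
          simp [persSup]
        rw [hbot]
        exact disjoint_bot_left
      · have hbot : (persSup (∅ : Set (PersSubmod k V))).carrier x = ⊥ := by
          simp [persSup]
        rw [hbot, bot_sup_eq]
    · obtain ⟨p1, hp1⟩ := hne
      set A' : Set (PersSubmod k V) := ⋃ p ∈ c, (p : T).1.1 with hA'def
      let B' : PersSubmod k V :=
        ⟨fun x => ⨅ p : c, (p : T).1.2.carrier x, by
          intro x y h v hv
          refine Submodule.mem_iInf _ |>.2 fun p => ?_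
          exact (p : T).1.2.mapLe h v ((Submodule.mem_iInf _).1 hv p)⟩
      -- every finite subset of A' lies in one member of the chain
      have hfin : ∀ s : Finset (PersSubmod k V), ↑s ⊆ A' →
          ∃ p, p ∈ c ∧ ↑s ⊆ (p : T).1.1 := by
        intro s
        induction s using Finset.induction_on with
        | empty => exact fun _ => ⟨p1, hp1, by simp⟩
        | @insert U s' hUs ih =>
          intro hsub
          have hUmem : U ∈ A' := hsub (by simp)
          obtain ⟨p2, hp2c, hUp2⟩ : ∃ p2, p2 ∈ c ∧ U ∈ (p2 : T).1.1 := by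
            simpa [hA'def] using hUmem
          obtain ⟨p3, hp3c, hs'p3⟩ := ih (fun W hW => hsub (by simp [hW]))
          rcases eq_or_ne p2 p3 with rfl | hne23
          · exact ⟨p2, hp2c, by
              intro W hW
              rcases Finset.mem_coe.1 hW |> Finset.mem_insert.1 with rfl | hW'
              · exact hUp2
              · exact hs'p3 hW'⟩
          rcases hc hp2c hp3c hne23 with h | h
          · refine ⟨p3, hp3c, ?_⟩
            intro W hW
            rcases Finset.mem_coe.1 hW |> Finset.mem_insert.1 with rfl | hW'
            · exact h.1 hUp2
            · exact hs'p3 hW'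
          · refine ⟨p2, hp2c, ?_⟩
            intro W hW
            rcases Finset.mem_coe.1 hW |> Finset.mem_insert.1 with rfl | hW'
            · exact hUp2
            · exact h.1 (hs'p3 hW')
      -- the complements stabilize pointwise
      have hstab : ∀ x : P, ∃ p₀, p₀ ∈ c ∧ ∀ p ∈ c,
          (p₀ : T).1.2.carrier x ≤ (p : T).1.2.carrier x := by
        intro x
        haveI := hfd x
        obtain ⟨p₀, hp₀c, hp₀⟩ : ∃ p₀ ∈ c, ∀ p ∈ c,
            Module.finrank k ((p₀ : T).1.2.carrier x) ≤
              Module.finrank k ((p : T).1.2.carrier x) := by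
          have hne' : ((fun p : T => Module.finrank k (p.1.2.carrier x)) '' c).Nonempty :=
            ⟨_, Set.mem_image_of_mem _ hp1⟩
          obtain ⟨p₀, hp₀c, hfp₀⟩ := Nat.sInf_mem hne'
          exact ⟨p₀, hp₀c, fun p hp =>
            le_trans (le_of_eq hfp₀) (Nat.sInf_le ⟨p, hp, rfl⟩)⟩
        refine ⟨p₀, hp₀c, fun p hp => ?_⟩
        rcases eq_or_ne p p₀ with rfl | hne2
        · exact le_rfl
        rcases hc hp hp₀c hne2 with h | h
        · exact h.2 x
        · exact (Submodule.eq_of_le_of_finrank_le (h.2 x) (hp₀ p hp)).ge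
      -- membership in the big sup factors through a chain element
      have hsupA' : ∀ x : P, ∀ v : V.space x, v ∈ (persSup A').carrier x →
          ∃ p, p ∈ c ∧ v ∈ (persSup ((p : T).1.1)).carrier x := by
        intro x v hv
        obtain ⟨s, hs⟩ := Submodule.mem_iSup_iff_exists_finset.1 hv
        obtain ⟨p, hpc, hsp⟩ := hfin (s.image Subtype.val) (by
          intro W hW
          rcases Finset.mem_coe.1 hW |> Finset.mem_image.1 with ⟨W', _, rfl⟩
          exact W'.2)
        refine ⟨p, hpc, ?_⟩
        have hle : (⨆ W ∈ s, (W : PersSubmod k V).carrier x) ≤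
            (persSup ((p : T).1.1)).carrier x := by
          refine iSup₂_le fun W hWs => ?_
          exact le_iSup (fun W' : (p : T).1.1 => (W' : PersSubmod k V).carrier x)
            ⟨W.1, hsp (Finset.mem_coe.2 (Finset.mem_image.2 ⟨W, hWs, rfl⟩))⟩
        exact hle hs
      have hgood : GoodPair E A' B' := by
        refine ⟨Set.iUnion₂_subset fun p hp => (p : T).2.1, fun x => ⟨?_, ?_, ?_⟩⟩
        · -- independence
          intro U₀
          refine Submodule.disjoint_def.2 fun v hv1 hv2 => ?_
          obtain ⟨s, hs⟩ := Submodule.mem_iSup_iff_exists_finset.1 hv2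
          obtain ⟨p, hpc, hsp⟩ := hfin (insert (U₀ : PersSubmod k V) (s.image Subtype.val)) (by
            intro W hW
            rcases Finset.mem_coe.1 hW |> Finset.mem_insert.1 with rfl | hW'
            · exact U₀.2
            · rcases Finset.mem_image.1 hW' with ⟨W', _, rfl⟩
              exact W'.2)
          have hU₀p : (U₀ : PersSubmod k V) ∈ (p : T).1.1 :=
            hsp (Finset.mem_coe.2 (Finset.mem_insert_self _ _))
          have hind := ((p : T).2.2 x).1 ⟨(U₀ : PersSubmod k V), hU₀p⟩
          refine Submodule.disjoint_def.1 hind v hv1 ?_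
          have hle : (⨆ W ∈ s, ⨆ _ : W ≠ U₀, (W : PersSubmod k V).carrier x) ≤
              ⨆ (W' : (p : T).1.1) (_ : W' ≠ ⟨(U₀ : PersSubmod k V), hU₀p⟩),
                (W' : PersSubmod k V).carrier x := by
            refine iSup₂_le fun W hWs => iSup_le fun hWne => ?_
            have hWp : (W : PersSubmod k V) ∈ (p : T).1.1 :=
              hsp (Finset.mem_coe.2 (Finset.mem_insert_of_mem
                (Finset.mem_image.2 ⟨W, hWs, rfl⟩)))
            refine le_iSup₂ (f := fun (W' : (p : T).1.1)
              (_ : W' ≠ ⟨(U₀ : PersSubmod k V), hU₀p⟩) =>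
              (W' : PersSubmod k V).carrier x) ⟨(W : PersSubmod k V), hWp⟩ ?_
            intro hEq
            exact hWne (Subtype.ext (Subtype.mk_eq_mk.1 hEq))
          exact hle hs
        · -- disjointness with B'
          refine Submodule.disjoint_def.2 fun v hv1 hv2 => ?_
          obtain ⟨p, hpc, hvp⟩ := hsupA' x v hv1
          have hvB : v ∈ (p : T).1.2.carrier x :=
            (iInf_le (fun q : c => (q : T).1.2.carrier x) ⟨p, hpc⟩) hv2
          exact Submodule.disjoint_def.1 ((p : T).2.2 x).2.1 v hvp hvB
        · -- spanning
          obtain ⟨p₀, hp₀c, hp₀⟩ := hstab x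
          have h1 : (persSup ((p₀ : T).1.1)).carrier x ≤ (persSup A').carrier x :=
            iSup_le fun W => le_iSup (fun W' : A' => (W' : PersSubmod k V).carrier x)
              ⟨W.1, Set.mem_biUnion hp₀c W.2⟩
          have h2 : (p₀ : T).1.2.carrier x ≤ B'.carrier x :=
            le_iInf fun q => hp₀ q q.2
          refine eq_top_iff.2 ?_
          rw [← ((p₀ : T).2.2 x).2.2]
          exact sup_le_sup h1 h2
      refine ⟨⟨(A', B'), hgood⟩, fun a ha => ⟨fun W hW => Set.mem_biUnion ha hW,
        fun x => iInf_le (fun q : c => (q : T).1.2.carrier x) ⟨a, ha⟩⟩⟩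
  obtain ⟨m, hm⟩ := exists_maximal_of_chains_bounded hbdd rtrans
  obtain ⟨gE, gx⟩ := m.2
  have hBbot : ∀ x : P, m.1.2.carrier x = ⊥ := by
    by_contra hB
    push_neg at hB
    have hnz : m.1.2.Nonzero k := hB
    have hsummand : m.1.2.IsSummand k := by
      refine ⟨persSup m.1.1, fun x => ⟨((gx x).2.1).symm, ?_⟩⟩
      rw [codisjoint_iff, sup_comm]
      exact (gx x).2.2
    obtain ⟨U, hUE, hUB, Z', hZ'B, hZ'⟩ := hyp m.1.2 hnz hsummand
    have hUA : U ∉ m.1.1 := by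
      intro hUA
      obtain ⟨x, hx⟩ := hE U hUE
      apply hx
      have h1 : U.carrier x ≤ (persSup m.1.1).carrier x :=
        le_iSup (fun W : m.1.1 => (W : PersSubmod k V).carrier x) ⟨U, hUA⟩
      exact (((gx x).2.1).mono_left h1).eq_bot_of_le (hUB x)
    have hgood2 : GoodPair E (insert U m.1.1) Z' := by
      refine ⟨Set.insert_subset hUE gE, fun x => ⟨?_, ?_, ?_⟩⟩
      · -- independence over insert
        intro W₀
        rcases Set.mem_insert_iff.1 W₀.2 with hW₀U | hW₀A
        · have hle : (⨆ (W : (insert U m.1.1 : Set (PersSubmod k V))) (_ : W ≠ W₀),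
              (W : PersSubmod k V).carrier x) ≤ (persSup m.1.1).carrier x := by
            refine iSup₂_le fun W hWne => ?_
            rcases Set.mem_insert_iff.1 W.2 with hWU | hWA
            · exact absurd (Subtype.ext (hWU.trans hW₀U.symm)) hWne
            · exact le_iSup (fun W' : m.1.1 => (W' : PersSubmod k V).carrier x) ⟨W.1, hWA⟩
          have hdUa : Disjoint ((W₀ : PersSubmod k V).carrier x)
              ((persSup m.1.1).carrier x) := by
            rw [show (W₀ : PersSubmod k V) = U from hW₀U]
            exact ((gx x).2.1).symm.mono_left (hUB x)
          exact hdUa.mono_right hle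
        · have hle : (⨆ (W : (insert U m.1.1 : Set (PersSubmod k V))) (_ : W ≠ W₀),
              (W : PersSubmod k V).carrier x) ≤
              (⨆ (W' : m.1.1) (_ : W' ≠ ⟨(W₀ : PersSubmod k V), hW₀A⟩),
                (W' : PersSubmod k V).carrier x) ⊔ U.carrier x := by
            refine iSup₂_le fun W hWne => ?_
            rcases Set.mem_insert_iff.1 W.2 with hWU | hWA
            · rw [show (W : PersSubmod k V) = U from hWU]
              exact le_sup_right
            · refine le_trans ?_ le_sup_left
              refine le_iSup₂ (f := fun (W' : m.1.1)
                (_ : W' ≠ ⟨(W₀ : PersSubmod k V), hW₀A⟩) =>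
                (W' : PersSubmod k V).carrier x) ⟨(W : PersSubmod k V), hWA⟩ ?_
              intro hEq
              exact hWne (Subtype.ext (Subtype.mk_eq_mk.1 hEq))
          have hind := (gx x).1 ⟨(W₀ : PersSubmod k V), hW₀A⟩
          have h2 : Disjoint ((W₀ : PersSubmod k V).carrier x ⊔
              (⨆ (W' : m.1.1) (_ : W' ≠ ⟨(W₀ : PersSubmod k V), hW₀A⟩),
                (W' : PersSubmod k V).carrier x)) (U.carrier x) := by
            refine Disjoint.mono ?_ (hUB x) ((gx x).2.1)
            refine sup_le (le_iSup (fun W' : m.1.1 =>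
              (W' : PersSubmod k V).carrier x) ⟨(W₀ : PersSubmod k V), hW₀A⟩) ?_
            exact iSup₂_le fun W' _ => le_iSup (fun W'' : m.1.1 =>
              (W'' : PersSubmod k V).carrier x) W'
          exact (hind.disjoint_sup_right_of_disjoint_sup_left h2).mono_right hle
      · -- disjointness
        rw [persSup_insert_carrier]
        rw [sup_comm]
        refine Disjoint.disjoint_sup_left_of_disjoint_sup_right (hZ' x).1 ?_
        rw [(hZ' x).2]
        exact (gx x).2.1
      · -- spanning
        rw [persSup_insert_carrier, sup_comm (U.carrier x), sup_assoc, (hZ' x).2]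
        exact (gx x).2.2
    have hrmq : r m ⟨(insert U m.1.1, Z'), hgood2⟩ :=
      ⟨Set.subset_insert _ _, fun x => hZ'B x⟩
    exact hUA ((hm _ hrmq).1 (Set.mem_insert U m.1.1))
  refine ⟨m.1.1, gE, fun x => ⟨(gx x).1, ?_⟩⟩
  have := (gx x).2.2
  rw [hBbot x, sup_bot_eq] at this
  exact this
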